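/- Almost surely, σ_∞ ≥ lim_{r→∞} liminf_{n→∞} ρ_n^{(r)} (the limit over r exists since r ↦ ρ_n^{(r)} is nondecreasing for each n and ω). -/

import Mathlib

open MeasureTheory Filter Set

section Stmt5Aux

variable {E : Type*} [NormedAddCommGroup E]

private lemma stmt5_bdd (x : ℝ → E) {s T : ℝ} (r : ℝ) (hT : 0 < T) :
    BddBelow ({t : ℝ | t ∈ Set.Ioo 0 s ∧ r < ‖x t‖} ∪ {T}) := by
  refine ⟨0, ?_⟩
  rintro t (⟨⟨h1, _⟩, _⟩ | h)
  · exact h1.le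
  · rw [Set.mem_singleton_iff] at h; subst h; exact hT.le

private lemma stmt5_ne (x : ℝ → E) (s T r : ℝ) :
    ({t : ℝ | t ∈ Set.Ioo 0 s ∧ r < ‖x t‖} ∪ {T}).Nonempty :=
  ⟨T, Or.inr rfl⟩

private lemma stmt5_nonneg (x : ℝ → E) {s T : ℝ} (r : ℝ) (hT : 0 < T) :
    0 ≤ sInf ({t : ℝ | t ∈ Set.Ioo 0 s ∧ r < ‖x t‖} ∪ {T}) := by
  refine le_csInf (stmt5_ne x s T r) ?_
  rintro b (⟨⟨h1, _⟩, _⟩ | h)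
  · exact h1.le
  · rw [Set.mem_singleton_iff] at h; subst h; exact hT.le

private lemma stmt5_leT (x : ℝ → E) {s T : ℝ} (r : ℝ) (hT : 0 < T) :
    sInf ({t : ℝ | t ∈ Set.Ioo 0 s ∧ r < ‖x t‖} ∪ {T}) ≤ T :=
  csInf_le (stmt5_bdd x r hT) (Or.inr rfl)

private lemma stmt5_mono (x : ℝ → E) {s T : ℝ} (hT : 0 < T) {r r' : ℝ} (h : r ≤ r') :
    sInf ({t : ℝ | t ∈ Set.Ioo 0 s ∧ r < ‖x t‖} ∪ {T})
      ≤ sInf ({t : ℝ | t ∈ Set.Ioo 0 s ∧ r' < ‖x t‖} ∪ {T}) := by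
  refine csInf_le_csInf (stmt5_bdd x r hT) (stmt5_ne x s T r') ?_
  rintro b (⟨h1, h2⟩ | hb)
  · exact Or.inl ⟨h1, lt_of_le_of_lt h h2⟩
  · exact Or.inr hb

/-- before the hitting time of level `r`, the norm is at most `r`. -/
private lemma stmt5_norm_le (x : ℝ → E) {s T r t : ℝ} (hT : 0 < T)
    (hs : s ∈ Set.Ioc 0 T)
    (hexp : s < T → ∀ M : ℝ, ∃ᶠ u in nhdsWithin s (Set.Iio s), M < ‖x u‖)
    (ht : t ∈ Set.Ioo 0 (sInf ({t : ℝ | t ∈ Set.Ioo 0 s ∧ r < ‖x t‖} ∪ {T}))) :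
    ‖x t‖ ≤ r := by
  have hbdd := stmt5_bdd x (s := s) r hT
  have htnot : t ∉ ({t : ℝ | t ∈ Set.Ioo 0 s ∧ r < ‖x t‖} ∪ {T}) :=
    notMem_of_lt_csInf ht.2 hbdd
  have hts : t < s := by
    rcases eq_or_lt_of_le hs.2 with heq | hlt
    · have hle := stmt5_leT x (s := s) r hT
      linarith [ht.2]
    · have h1 := hexp hlt r
      have h2 : ∀ᶠ u in nhdsWithin s (Set.Iio s), u ∈ Set.Ioo 0 s := by
        filter_upwards [eventually_mem_nhdsWithin,
          (eventually_gt_nhds hs.1).filter_mono nhdsWithin_le_nhds] with u hu hu0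
        exact ⟨hu0, hu⟩
      obtain ⟨u, hu1, hu2⟩ := (h1.and_eventually h2).exists
      have : sInf ({t : ℝ | t ∈ Set.Ioo 0 s ∧ r < ‖x t‖} ∪ {T}) ≤ u :=
        csInf_le hbdd (Or.inl ⟨hu2, hu1⟩)
      linarith [ht.2, hu2.2]
  by_contra hcon
  push_neg at hcon
  exact htnot (Or.inl ⟨⟨ht.1, hts⟩, hcon⟩)

/-- if the norm is bounded by `C < R` on `[0, t0]`, then the hitting time of level `R`
is at least `t0`. -/
private lemma stmt5_le_hit (x : ℝ → E) {s T t0 C R : ℝ}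
    (hsT : s ≤ T) (ht0 : t0 ∈ Set.Ioo 0 s)
    (hC : ∀ u ∈ Set.Icc 0 t0, ‖x u‖ ≤ C) (hR : C < R) :
    t0 ≤ sInf ({t : ℝ | t ∈ Set.Ioo 0 s ∧ R < ‖x t‖} ∪ {T}) := by
  refine le_csInf (stmt5_ne x s T R) ?_
  rintro b (⟨hb1, hb2⟩ | hb)
  · by_contra h
    push_neg at h
    exact absurd hb2 (not_lt.2 ((hC b ⟨hb1.1.le, h.le⟩).trans hR.le))
  · rw [Set.mem_singleton_iff] at hb; subst hb
    linarith [ht0.2]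

end Stmt5Aux

theorem stmt_5
    {Ω : Type*} [MeasurableSpace Ω] (P : Measure Ω) [IsProbabilityMeasure P]
    {E : Type*} [NormedAddCommGroup E] [NormedSpace ℝ E] [CompleteSpace E]
    [MeasurableSpace E] [BorelSpace E]
    (T : ℝ) (hT : 0 < T)
    -- the explosion times σ_n (n ∈ ℕ) and σ_∞
    (σ : ℕ → Ω → ℝ) (σi : Ω → ℝ)
    (hσmeas : ∀ n, Measurable (σ n)) (hσimeas : Measurable σi)
    (hσmem : ∀ n ω, σ n ω ∈ Set.Ioc 0 T) (hσimem : ∀ ω, σi ω ∈ Set.Ioc 0 T)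
    -- the processes X_n (n ∈ ℕ) and X_∞, jointly measurable
    (X : ℕ → ℝ → Ω → E) (Xi : ℝ → Ω → E)
    (hXmeas : ∀ n, Measurable fun p : ℝ × Ω => X n p.1 p.2)
    (hXimeas : Measurable fun p : ℝ × Ω => Xi p.1 p.2)
    -- path continuity on [0, σ_n(ω)), and on [0,T] if σ_n(ω) = T
    (hXcont : ∀ n ω, ContinuousOn (fun t => X n t ω) (Set.Ico 0 (σ n ω)))
    (hXcontT : ∀ n ω, σ n ω = T → ContinuousOn (fun t => X n t ω) (Set.Icc 0 T))
    (hXicont : ∀ ω, ContinuousOn (fun t => Xi t ω) (Set.Ico 0 (σi ω)))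
    (hXicontT : ∀ ω, σi ω = T → ContinuousOn (fun t => Xi t ω) (Set.Icc 0 T))
    -- σ_n is an explosion time: on {σ_n < T}, limsup_{t ↑ σ_n} ‖X_n(t)‖ = ∞
    (hexpl : ∀ n ω, σ n ω < T →
      ∀ M : ℝ, ∃ᶠ t in nhdsWithin (σ n ω) (Set.Iio (σ n ω)), M < ‖X n t ω‖)
    (hexpli : ∀ ω, σi ω < T →
      ∀ M : ℝ, ∃ᶠ t in nhdsWithin (σi ω) (Set.Iio (σi ω)), M < ‖Xi t ω‖)
    -- the stopping times ρ_n^{(r)} = inf { t ∈ (0, σ_n) : ‖X_n(t)‖ > r }, inf ∅ := T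
    (ρ : ℕ → ℝ → Ω → ℝ) (ρi : ℝ → Ω → ℝ)
    (hρ : ∀ n r ω, ρ n r ω = sInf ({t : ℝ | t ∈ Set.Ioo 0 (σ n ω) ∧ r < ‖X n t ω‖} ∪ {T}))
    (hρi : ∀ r ω, ρi r ω = sInf ({t : ℝ | t ∈ Set.Ioo 0 (σi ω) ∧ r < ‖Xi t ω‖} ∪ {T}))
    -- the globally defined processes X_n^{(r)} (denoted Y n r) and X_∞^{(r)} (denoted Yi r)
    (Y : ℕ → ℝ → ℝ → Ω → E) (Yi : ℝ → ℝ → Ω → E)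
    (hYmeas : ∀ n r, Measurable fun p : ℝ × Ω => Y n r p.1 p.2)
    (hYimeas : ∀ r, Measurable fun p : ℝ × Ω => Yi r p.1 p.2)
    (hYcont : ∀ n r ω, Continuous fun t => Y n r t ω)
    (hYicont : ∀ r ω, Continuous fun t => Yi r t ω)
    -- assumption (a)
    (ha : ∀ n r, 0 < r → ∀ᵐ ω ∂P, ∀ t ∈ Set.Icc 0 (ρ n r ω), Y n r t ω = X n t ω)
    (hai : ∀ r, 0 < r → ∀ᵐ ω ∂P, ∀ t ∈ Set.Icc 0 (ρi r ω), Yi r t ω = Xi t ω)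
    -- assumption (b): X_n^{(r)} → X_∞^{(r)} in L⁰(Ω; C([0,T]; E))
    (hb : ∀ r, 0 < r → TendstoInMeasure P
      (fun n ω => ⨆ t : Set.Icc (0:ℝ) T, ‖Y n r (t : ℝ) ω - Yi r (t : ℝ) ω‖)
      atTop (fun _ => (0 : ℝ)))    :
    ∀ᵐ ω ∂P, ∃ L : ℝ,
      Tendsto (fun r : ℝ => liminf (fun n => ρ n r ω) atTop) atTop (nhds L) ∧
      L ≤ σi ω := by
  -- for each level (m+1), choose a subsequence along which assumption (b) holds a.e.
  have hsub : ∀ m : ℕ, ∃ ns : ℕ → ℕ, StrictMono ns ∧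
      ∀ᵐ ω ∂P, Tendsto
        (fun k => ⨆ t : Set.Icc (0:ℝ) T,
          ‖Y (ns k) ((m : ℝ) + 1) (t : ℝ) ω - Yi ((m : ℝ) + 1) (t : ℝ) ω‖)
        atTop (nhds 0) := by
    intro m
    obtain ⟨ns, h1, h2⟩ := (hb ((m : ℝ) + 1) (by positivity)).exists_seq_tendsto_ae
    exact ⟨ns, h1, h2⟩
  choose ns hns hnsae using hsub
  have hA : ∀ᵐ ω ∂P,
      (∀ n m : ℕ, ∀ t ∈ Set.Icc 0 (ρ n ((m : ℝ) + 1) ω), Y n ((m : ℝ) + 1) t ω = X n t ω) ∧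
      (∀ m : ℕ, ∀ t ∈ Set.Icc 0 (ρi ((m : ℝ) + 1) ω), Yi ((m : ℝ) + 1) t ω = Xi t ω) ∧
      (∀ m : ℕ, Tendsto
        (fun k => ⨆ t : Set.Icc (0:ℝ) T,
          ‖Y (ns m k) ((m : ℝ) + 1) (t : ℝ) ω - Yi ((m : ℝ) + 1) (t : ℝ) ω‖)
        atTop (nhds 0)) := by
    exact (ae_all_iff.2 fun n => ae_all_iff.2 fun m => ha n _ (by positivity)).and
      ((ae_all_iff.2 fun m => hai _ (by positivity)).and (ae_all_iff.2 fun m => hnsae m))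
  filter_upwards [hA] with ω hω
  obtain ⟨ha', hai', hb'⟩ := hω
  -- basic facts about the stopping times
  have hρmem : ∀ n (r : ℝ), ρ n r ω ∈ Set.Icc 0 T := by
    intro n r
    rw [hρ]
    exact ⟨stmt5_nonneg _ r hT, stmt5_leT _ r hT⟩
  have hρimem : ∀ r : ℝ, ρi r ω ∈ Set.Icc 0 T := by
    intro r
    rw [hρi]
    exact ⟨stmt5_nonneg _ r hT, stmt5_leT _ r hT⟩
  have hbddl : ∀ r : ℝ, IsBoundedUnder (· ≥ ·) atTop (fun n => ρ n r ω) := fun r =>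
    isBoundedUnder_of ⟨0, fun n => (hρmem n r).1⟩
  have hbddu : ∀ r : ℝ, IsBoundedUnder (· ≤ ·) atTop (fun n => ρ n r ω) := fun r =>
    isBoundedUnder_of ⟨T, fun n => (hρmem n r).2⟩
  have hmono_f : Monotone (fun r : ℝ => liminf (fun n => ρ n r ω) atTop) := by
    intro r r' hr
    refine liminf_le_liminf (Eventually.of_forall fun n => ?_) (hbddl r)
      ((hbddu r').isCoboundedUnder_ge)
    rw [hρ, hρ]
    exact stmt5_mono _ hT hr
  have hfleT : ∀ r : ℝ, liminf (fun n => ρ n r ω) atTop ≤ T := fun r =>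
    liminf_le_of_frequently_le (Frequently.of_forall fun n => (hρmem n r).2) (hbddl r)
  -- the key estimate : liminf_n ρ n (m+1) ≤ σi ω
  have hkey : ∀ m : ℕ, liminf (fun n => ρ n ((m : ℝ) + 1) ω) atTop ≤ σi ω := by
    intro m
    rcases eq_or_lt_of_le (hσimem ω).2 with hσT | hσT
    · rw [hσT]; exact hfleT _
    · -- explosion gives a time t0 < σi ω with large norm
      have h1 := hexpli ω hσT ((m : ℝ) + 1)
      have h2 : ∀ᶠ u in nhdsWithin (σi ω) (Set.Iio (σi ω)), u ∈ Set.Ioo 0 (σi ω) := by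
        filter_upwards [eventually_mem_nhdsWithin,
          (eventually_gt_nhds (hσimem ω).1).filter_mono nhdsWithin_le_nhds] with u hu hu0
        exact ⟨hu0, hu⟩
      obtain ⟨t0, hxt0, ht0⟩ := (h1.and_eventually h2).exists
      -- a bound for ‖Xi‖ on [0, t0]
      obtain ⟨C, hC⟩ := isCompact_Icc.exists_bound_of_continuousOn
        ((hXicont ω).mono (fun u hu => ⟨hu.1, lt_of_le_of_lt hu.2 ht0.2⟩))
      obtain ⟨K, hK⟩ := exists_nat_gt (max C ((m : ℝ) + 1))
      have hCR : C < (K : ℝ) + 1 :=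
        lt_of_le_of_lt (le_max_left _ _) (hK.trans (lt_add_one _))
      have hmR : (m : ℝ) + 1 ≤ (K : ℝ) + 1 :=
        le_of_lt (lt_of_le_of_lt (le_max_right _ _) (hK.trans (lt_add_one _)))
      have ht0ρi : t0 ≤ ρi ((K : ℝ) + 1) ω := by
        rw [hρi]
        exact stmt5_le_hit _ (hσimem ω).2 ht0 hC hCR
      have hYiv : Yi ((K : ℝ) + 1) t0 ω = Xi t0 ω := hai' K t0 ⟨ht0.1.le, ht0ρi⟩
      set δ := ‖Xi t0 ω‖ - ((m : ℝ) + 1) with hδ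
      have hδpos : 0 < δ := sub_pos.2 hxt0
      have hfreq : ∀ᶠ k in atTop, ρ (ns K k) ((m : ℝ) + 1) ω ≤ t0 := by
        have hev : ∀ᶠ k in atTop,
            (⨆ t : Set.Icc (0:ℝ) T,
              ‖Y (ns K k) ((K : ℝ) + 1) (t : ℝ) ω - Yi ((K : ℝ) + 1) (t : ℝ) ω‖) < δ :=
          (hb' K).eventually_lt_const hδpos
        filter_upwards [hev] with k hk
        by_contra hcon
        push_neg at hcon
        have hle : ρ (ns K k) ((m : ℝ) + 1) ω ≤ ρ (ns K k) ((K : ℝ) + 1) ω := by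
          rw [hρ, hρ]
          exact stmt5_mono _ hT hmR
        have hXle : ‖X (ns K k) t0 ω‖ ≤ (m : ℝ) + 1 := by
          have hcon' := hcon
          rw [hρ] at hcon'
          exact stmt5_norm_le _ hT (hσmem _ ω) (hexpl _ ω) ⟨ht0.1, hcon'⟩
        have hYX : Y (ns K k) ((K : ℝ) + 1) t0 ω = X (ns K k) t0 ω :=
          ha' (ns K k) K t0 ⟨ht0.1.le, le_trans hcon.le hle⟩
        have hbddr : BddAbove (Set.range fun t : Set.Icc (0:ℝ) T =>
            ‖Y (ns K k) ((K : ℝ) + 1) (t : ℝ) ω - Yi ((K : ℝ) + 1) (t : ℝ) ω‖) := by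
          have hcont : ContinuousOn
              (fun t : ℝ => ‖Y (ns K k) ((K : ℝ) + 1) t ω - Yi ((K : ℝ) + 1) t ω‖)
              (Set.Icc 0 T) :=
            (((hYcont _ _ ω).sub (hYicont _ ω)).norm).continuousOn
          have himg := isCompact_Icc.bddAbove_image hcont
          rwa [Set.image_eq_range] at himg
        have ht0Icc : t0 ∈ Set.Icc (0:ℝ) T := ⟨ht0.1.le, ht0.2.le.trans (hσimem ω).2⟩
        have hptle : ‖Y (ns K k) ((K : ℝ) + 1) t0 ω - Yi ((K : ℝ) + 1) t0 ω‖ ≤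
            ⨆ t : Set.Icc (0:ℝ) T,
              ‖Y (ns K k) ((K : ℝ) + 1) (t : ℝ) ω - Yi ((K : ℝ) + 1) (t : ℝ) ω‖ :=
          le_ciSup hbddr (⟨t0, ht0Icc⟩ : Set.Icc (0:ℝ) T)
        have e1 : ‖Yi ((K : ℝ) + 1) t0 ω‖ - ‖Y (ns K k) ((K : ℝ) + 1) t0 ω‖ ≤
            ‖Yi ((K : ℝ) + 1) t0 ω - Y (ns K k) ((K : ℝ) + 1) t0 ω‖ := norm_sub_norm_le _ _
        have e2 : ‖Yi ((K : ℝ) + 1) t0 ω - Y (ns K k) ((K : ℝ) + 1) t0 ω‖ =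
            ‖Y (ns K k) ((K : ℝ) + 1) t0 ω - Yi ((K : ℝ) + 1) t0 ω‖ := norm_sub_rev _ _
        have e3 : ‖Yi ((K : ℝ) + 1) t0 ω‖ = ‖Xi t0 ω‖ := by rw [hYiv]
        have e4 : ‖Y (ns K k) ((K : ℝ) + 1) t0 ω‖ = ‖X (ns K k) t0 ω‖ := by rw [hYX]
        linarith
      have hfreq' : ∃ᶠ n in atTop, ρ n ((m : ℝ) + 1) ω ≤ t0 :=
        (hns K).tendsto_atTop.frequently hfreq.frequently
      exact (liminf_le_of_frequently_le hfreq' (hbddl _)).trans ht0.2.le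
  -- conclude by monotone convergence
  have hbddA : BddAbove (Set.range fun r : ℝ => liminf (fun n => ρ n r ω) atTop) := by
    refine ⟨T, ?_⟩
    rintro _ ⟨r, rfl⟩
    exact hfleT r
  refine ⟨⨆ r : ℝ, liminf (fun n => ρ n r ω) atTop, tendsto_atTop_ciSup hmono_f hbddA, ?_⟩
  refine le_of_tendsto (tendsto_atTop_ciSup hmono_f hbddA) ?_
  filter_upwards [eventually_ge_atTop (0:ℝ)] with r hr
  obtain ⟨k, hk⟩ := exists_nat_ge r
  exact (hmono_f (hk.trans (lt_add_one (k : ℝ)).le)).trans (hkey k)
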